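/- arXiv:1909.13588 — 3 statements merged into one kernel-verified Lean document; each statement's English description precedes it below -/
import Mathlib

section
/- Let A be an associative ℂ-algebra, g : A → A an invertible linear map, and T : A → ℂ a g-twisted trace (T(ab) = T(b g(a))). If the bilinear form (a,b) ↦ T(ab) has zero kernel (i.e., T(ab) = 0 for all b implies a = 0), then g is an algebra automorphism: g(ab) = g(a)g(b) for all a, b. -/
/-- If `T` is a `g`-twisted trace on an associative `ℂ`-algebra `A`
(`T(ab) = T(b g(a))`, `g` an invertible linear map) and the bilinear form
`(a,b) ↦ T(ab)` has zero kernel, then `g` is an algebra automorphism: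
`g(ab) = g(a) g(b)`. -/
theorem twisted_trace_nondeg_automorphism {A : Type*} [Ring A] [Algebra ℂ A]
    (g : A ≃ₗ[ℂ] A) (T : A →ₗ[ℂ] ℂ)
    (hT : ∀ a b : A, T (a * b) = T (b * g a))
    (hker : ∀ a : A, (∀ b : A, T (a * b) = 0) → a = 0) :
    ∀ a b : A, g (a * b) = g a * g b := by
  intro a b
  have key : ∀ c : A, T (c * (g (a * b) - g a * g b)) = 0 := by
    intro c
    have h1 : T (c * g (a * b)) = T (a * b * c) := (hT (a * b) c).symm
    have h2 : T (a * (b * c)) = T ((b * c) * g a) := hT a (b * c)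
    have h3 : T (b * (c * g a)) = T ((c * g a) * g b) := hT b (c * g a)
    have : T (c * g (a * b)) = T (c * (g a * g b)) := by
      rw [h1, mul_assoc, h2, mul_assoc, h3, mul_assoc]
    simp [mul_sub, map_sub, this]
  have hd : g (a * b) - g a * g b = 0 := by
    apply hker
    intro e
    have := key (g.symm e)
    rwa [hT (g.symm e) (g (a * b) - g a * g b), g.apply_symm_apply] at this
  exact sub_eq_zero.mp hd
end

section
/- Let V be a finite-dimensional symplectic vector space, W(V) the Weyl algebra of V, and g ∈ Sp(V) a symplectic automorphism having 1 as an eigenvalue. Then every g-twisted trace on W(V) vanishes: if T : W(V) → ℂ is linear with T(ab) = T(b g(a)) for all a, b, then T = 0. -/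
/-- The defining relation of the Weyl algebra of a symplectic vector space:
`v w − w v = ω(v,w)`. -/
inductive WeylRel {V : Type*} [AddCommGroup V] [Module ℂ V]
    (ω : V →ₗ[ℂ] V →ₗ[ℂ] ℂ) : TensorAlgebra ℂ V → TensorAlgebra ℂ V → Prop
  | mk (v w : V) : WeylRel ω
      (TensorAlgebra.ι ℂ v * TensorAlgebra.ι ℂ w -
        TensorAlgebra.ι ℂ w * TensorAlgebra.ι ℂ v)
      (algebraMap ℂ (TensorAlgebra ℂ V) (ω v w))

/-- The Weyl algebra `W(V)` of a symplectic vector space `(V, ω)`. -/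
abbrev WeylAlgebra {V : Type*} [AddCommGroup V] [Module ℂ V]
    (ω : V →ₗ[ℂ] V →ₗ[ℂ] ℂ) := RingQuot (WeylRel ω)

section Aux
variable {A : Type*} [Ring A] [Algebra ℂ A]

lemma auxD_pow_succ (D : A →ₗ[ℂ] A) (n : ℕ) (a : A) :
    (D ^ (n + 1)) a = (D ^ n) (D a) := by
  rw [pow_succ, Module.End.mul_apply]

lemma auxD_mono (D : A →ₗ[ℂ] A) {m n : ℕ} {a : A} (h : (D ^ m) a = 0)
    (hmn : m ≤ n) : (D ^ n) a = 0 := by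
  obtain ⟨k, rfl⟩ := Nat.exists_eq_add_of_le hmn
  rw [add_comm, pow_add, Module.End.mul_apply, h, map_zero]

lemma auxD_mul_nilp (D : A →ₗ[ℂ] A)
    (hD : ∀ a b : A, D (a * b) = D a * b + a * D b) :
    ∀ (k m n : ℕ) (a b : A), m + n ≤ k → (D ^ m) a = 0 → (D ^ n) b = 0 →
      (D ^ (m + n)) (a * b) = 0 := by
  intro k
  induction k with
  | zero =>
    intro m n a b hk ha hb
    obtain ⟨rfl, rfl⟩ : m = 0 ∧ n = 0 := by omega
    simp only [pow_zero, Module.End.one_apply] at ha ⊢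
    rw [ha, zero_mul, map_zero]
  | succ k ih =>
    intro m n a b hk ha hb
    match m, n with
    | 0, n =>
      simp only [pow_zero, Module.End.one_apply] at ha
      rw [ha, zero_mul, map_zero]
    | m + 1, 0 =>
      simp only [pow_zero, Module.End.one_apply] at hb
      rw [hb, mul_zero, map_zero]
    | m + 1, n + 1 =>
      have ha' : (D ^ m) (D a) = 0 := by rw [← auxD_pow_succ]; exact ha
      have hb' : (D ^ n) (D b) = 0 := by rw [← auxD_pow_succ]; exact hb
      have h1 : (D ^ (m + (n + 1))) (D a * b) = 0 := ih m (n + 1) _ _ (by omega) ha' hb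
      have h2 : (D ^ ((m + 1) + n)) (a * D b) = 0 := ih (m + 1) n _ _ (by omega) ha hb'
      have e : (m + 1) + (n + 1) = (m + (n + 1)) + 1 := by omega
      rw [e, auxD_pow_succ, hD, map_add, h1, show m + (n + 1) = (m + 1) + n by omega, h2,
        add_zero]

lemma auxD_surj (D : A →ₗ[ℂ] A)
    (hD : ∀ a b : A, D (a * b) = D a * b + a * D b)
    (w : A) (hw : D w = 1) :
    ∀ (N : ℕ) (a : A), (D ^ N) a = 0 → ∀ m : ℕ, ∃ b : A, D b = w ^ m * a := by
  have hwp : ∀ m : ℕ, D (w ^ (m + 1)) = ((m : ℂ) + 1) • w ^ m := by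
    intro m
    induction m with
    | zero => simpa using hw
    | succ m ihm =>
      rw [pow_succ, hD, ihm, hw, pow_succ, mul_one, smul_mul_assoc]
      push_cast
      rw [add_smul ((m : ℂ) + 1) 1, one_smul]
  intro N
  induction N with
  | zero =>
    intro a ha m
    simp only [pow_zero, Module.End.one_apply] at ha
    exact ⟨0, by rw [map_zero, ha, mul_zero]⟩
  | succ N ih =>
    intro a ha m
    have ha' : (D ^ N) (D a) = 0 := by rw [← auxD_pow_succ]; exact ha
    obtain ⟨b', hb'⟩ := ih (D a) ha' (m + 1)
    refine ⟨((m : ℂ) + 1)⁻¹ • (w ^ (m + 1) * a - b'), ?_⟩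
    have hne : ((m : ℂ) + 1) ≠ 0 := Nat.cast_add_one_ne_zero m
    rw [map_smul, map_sub, hD, hwp, hb', smul_mul_assoc, add_sub_cancel_right,
      smul_smul, inv_mul_cancel₀ hne, one_smul]

end Aux

/-- Let `V` be a finite-dimensional (nondegenerate) symplectic
vector space, `g` a symplectic automorphism of `V` having `1` as an eigenvalue
(there is a nonzero `u` with `g u = u`), and `G` the induced algebra
automorphism of the Weyl algebra `W(V)`.  Then every `G`-twisted trace on
`W(V)` vanishes. -/
theorem twisted_trace_weyl_eigenvalue_one_vanishes {V : Type*} [AddCommGroup V]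
    [Module ℂ V] [FiniteDimensional ℂ V]
    (ω : V →ₗ[ℂ] V →ₗ[ℂ] ℂ)
    (halt : ∀ v : V, ω v v = 0)
    (hnd : ∀ v : V, (∀ w : V, ω v w = 0) → v = 0)
    (g : V ≃ₗ[ℂ] V)
    (hsymp : ∀ v w : V, ω (g v) (g w) = ω v w)
    (u : V) (hu : u ≠ 0) (hgu : g u = u)
    (G : WeylAlgebra ω ≃ₐ[ℂ] WeylAlgebra ω)
    (hG : ∀ v : V, G (RingQuot.mkAlgHom ℂ (WeylRel ω) (TensorAlgebra.ι ℂ v)) =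
      RingQuot.mkAlgHom ℂ (WeylRel ω) (TensorAlgebra.ι ℂ (g v)))
    (T : WeylAlgebra ω →ₗ[ℂ] ℂ)
    (hT : ∀ a b : WeylAlgebra ω, T (a * b) = T (b * G a)) :
    T = 0 := by
  set π := RingQuot.mkAlgHom ℂ (WeylRel ω) with hπ
  set U : WeylAlgebra ω := π (TensorAlgebra.ι ℂ u) with hU
  set D : WeylAlgebra ω →ₗ[ℂ] WeylAlgebra ω :=
    LinearMap.mulLeft ℂ U - LinearMap.mulRight ℂ U with hDdef
  have hDapp : ∀ x : WeylAlgebra ω, D x = U * x - x * U := fun x => rfl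
  have hD : ∀ a b : WeylAlgebra ω, D (a * b) = D a * b + a * D b := by
    intro a b
    simp only [hDapp, sub_mul, mul_sub, mul_assoc]
    abel
  -- D on generators
  have hDv : ∀ v : V, D (π (TensorAlgebra.ι ℂ v)) = algebraMap ℂ (WeylAlgebra ω) (ω u v) := by
    intro v
    have h := RingQuot.mkAlgHom_rel ℂ (WeylRel.mk (ω := ω) u v)
    rw [map_sub, map_mul, map_mul, AlgHom.commutes] at h
    rw [hDapp]
    exact h
  have hDalg : ∀ c : ℂ, D (algebraMap ℂ (WeylAlgebra ω) c) = 0 := by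
    intro c
    rw [hDapp, Algebra.commutes, sub_self]
  -- local nilpotency
  have hnilp : ∀ a : WeylAlgebra ω, ∃ N : ℕ, (D ^ N) a = 0 := by
    intro a
    obtain ⟨x, rfl⟩ := RingQuot.mkAlgHom_surjective ℂ (WeylRel ω) a
    induction x using TensorAlgebra.induction with
    | algebraMap r =>
      refine ⟨1, ?_⟩
      rw [pow_one, AlgHom.commutes, hDalg]
    | ι v =>
      refine ⟨2, ?_⟩
      rw [show (2 : ℕ) = 1 + 1 from rfl, auxD_pow_succ, hDv, pow_one, hDalg]
    | mul x y hx hy =>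
      obtain ⟨m, hm⟩ := hx
      obtain ⟨n, hn⟩ := hy
      exact ⟨m + n, by rw [map_mul]; exact auxD_mul_nilp D hD (m + n) m n _ _ le_rfl hm hn⟩
    | add x y hx hy =>
      obtain ⟨m, hm⟩ := hx
      obtain ⟨n, hn⟩ := hy
      refine ⟨m + n, ?_⟩
      rw [map_add, map_add, auxD_mono D hm (Nat.le_add_right m n),
        auxD_mono D hn (Nat.le_add_left n m), add_zero]
  -- a dual partner for u
  obtain ⟨w0, hw0⟩ : ∃ w0 : V, ω u w0 ≠ 0 := by
    by_contra h
    push_neg at h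
    exact hu (hnd u h)
  set w : V := (ω u w0)⁻¹ • w0 with hwdef
  set Wc : WeylAlgebra ω := π (TensorAlgebra.ι ℂ w) with hWc
  have hDw : D Wc = 1 := by
    rw [hWc, hDv, hwdef, map_smul, smul_eq_mul, inv_mul_cancel₀ hw0, map_one]
  -- T vanishes on the image of D
  have hGU : G U = U := by rw [hU, hG u, hgu]
  have hTD : ∀ b : WeylAlgebra ω, T (D b) = 0 := by
    intro b
    rw [hDapp, map_sub, hT U b, hGU, sub_self]
  -- conclude
  ext a
  obtain ⟨N, hN⟩ := hnilp a
  obtain ⟨b, hb⟩ := auxD_surj D hD Wc hDw N a hN 0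
  rw [pow_zero, one_mul] at hb
  show T a = 0
  rw [← hb]
  exact hTD b
end

section
/- Let V be a finite-dimensional symplectic vector space, g ∈ Sp(V) with no eigenvalue 1. Then the space of g-twisted traces on the Weyl algebra W(V) is at most one-dimensional. More precisely, if E ⊂ W(V) is the span of elements ab − b·g(a), then the associated graded of E (with respect to the Bernstein filtration) contains the augmentation ideal of SV, so dim W(V)/E ≤ 1. -/
/-- For a symplectic automorphism `g` of a finite-dimensional
symplectic vector space `V` with no eigenvalue `1`, the space of `G`-twisted
traces on the Weyl algebra `W(V)` (where `G` is the automorphism of `W(V)`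
induced by `g`) is at most one-dimensional: any two such traces are linearly
dependent. -/
theorem twisted_traces_weyl_dim_le_one {V : Type*} [AddCommGroup V]
    [Module ℂ V] [FiniteDimensional ℂ V]
    (ω : V →ₗ[ℂ] V →ₗ[ℂ] ℂ)
    (halt : ∀ v : V, ω v v = 0)
    (hnd : ∀ v : V, (∀ w : V, ω v w = 0) → v = 0)
    (g : V ≃ₗ[ℂ] V)
    (hsymp : ∀ v w : V, ω (g v) (g w) = ω v w)
    (hone : ∀ v : V, g v = v → v = 0)
    (G : WeylAlgebra ω ≃ₐ[ℂ] WeylAlgebra ω)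
    (hG : ∀ v : V, G (RingQuot.mkAlgHom ℂ (WeylRel ω) (TensorAlgebra.ι ℂ v)) =
      RingQuot.mkAlgHom ℂ (WeylRel ω) (TensorAlgebra.ι ℂ (g v)))
    (T₁ T₂ : WeylAlgebra ω →ₗ[ℂ] ℂ)
    (hT₁ : ∀ a b : WeylAlgebra ω, T₁ (a * b) = T₁ (b * G a))
    (hT₂ : ∀ a b : WeylAlgebra ω, T₂ (a * b) = T₂ (b * G a)) :
    ∃ c d : ℂ, (c ≠ 0 ∨ d ≠ 0) ∧ c • T₁ + d • T₂ = 0 := by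
  classical
  set mk := RingQuot.mkAlgHom ℂ (WeylRel ω) with hmkdef
  -- surjectivity of 1 - g
  have hsurj : ∀ u : V, ∃ v : V, v - g v = u := by
    have hinj : Function.Injective ⇑((LinearMap.id : V →ₗ[ℂ] V) - g.toLinearMap) := by
      rw [← LinearMap.ker_eq_bot, LinearMap.ker_eq_bot']
      intro v hv
      simp only [LinearMap.sub_apply, LinearMap.id_apply, LinearEquiv.coe_coe] at hv
      exact hone v (sub_eq_zero.mp hv).symm
    have hs := LinearMap.injective_iff_surjective.mp hinj
    intro u
    obtain ⟨v, hv⟩ := hs u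
    exact ⟨v, by simpa using hv⟩
  -- the Weyl relation in the quotient
  have wrel : ∀ v w : V, mk (TensorAlgebra.ι ℂ v) * mk (TensorAlgebra.ι ℂ w)
      - mk (TensorAlgebra.ι ℂ w) * mk (TensorAlgebra.ι ℂ v)
      = algebraMap ℂ (WeylAlgebra ω) (ω v w) := by
    intro v w
    have h := RingQuot.mkAlgHom_rel ℂ (WeylRel.mk (ω := ω) v w)
    rw [map_sub, map_mul, map_mul, AlgHom.commutes] at h
    exact h
  set Vs : Submodule ℂ (WeylAlgebra ω) :=
    Submodule.span ℂ (Set.range fun v : V => mk (TensorAlgebra.ι ℂ v)) with hVsdef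
  set F : ℕ → Submodule ℂ (WeylAlgebra ω) :=
    fun n => ((1 : Submodule ℂ (WeylAlgebra ω)) ⊔ Vs) ^ n with hFdef
  have hF0 : F 0 = 1 := pow_zero _
  have hFsucc : ∀ n, F (n + 1) = F n ⊔ Vs * F n := by
    intro n
    show ((1 : Submodule ℂ (WeylAlgebra ω)) ⊔ Vs) ^ (n + 1) = _
    rw [pow_succ', Submodule.sup_mul, one_mul]
  have hFmono : Monotone F := by
    apply monotone_nat_of_le_succ
    intro n
    rw [hFsucc n]
    exact le_sup_left
  -- commutator of a generator with Vs lands in scalars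
  have comm1 : ∀ m ∈ Vs, ∀ v : V,
      mk (TensorAlgebra.ι ℂ v) * m - m * mk (TensorAlgebra.ι ℂ v)
        ∈ (1 : Submodule ℂ (WeylAlgebra ω)) := by
    intro m hm v
    induction hm using Submodule.span_induction with
    | mem x hx =>
      obtain ⟨w, rfl⟩ := hx
      rw [wrel]
      exact Submodule.mem_one.mpr ⟨ω v w, rfl⟩
    | zero => simpa using Submodule.zero_mem _
    | add x y hx hy ihx ihy =>
      have : mk (TensorAlgebra.ι ℂ v) * (x + y) - (x + y) * mk (TensorAlgebra.ι ℂ v)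
          = (mk (TensorAlgebra.ι ℂ v) * x - x * mk (TensorAlgebra.ι ℂ v))
            + (mk (TensorAlgebra.ι ℂ v) * y - y * mk (TensorAlgebra.ι ℂ v)) := by
        simp only [mul_sub, sub_mul, mul_add, add_mul, mul_assoc]; abel
      rw [this]; exact add_mem ihx ihy
    | smul c x hx ih =>
      have : mk (TensorAlgebra.ι ℂ v) * (c • x) - (c • x) * mk (TensorAlgebra.ι ℂ v)
          = c • (mk (TensorAlgebra.ι ℂ v) * x - x * mk (TensorAlgebra.ι ℂ v)) := by
        rw [mul_smul_comm, smul_mul_assoc, smul_sub]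
      rw [this]; exact Submodule.smul_mem _ c ih
  -- commutator of a generator with F n stays in F n
  have commF : ∀ n, ∀ b ∈ F n, ∀ v : V,
      mk (TensorAlgebra.ι ℂ v) * b - b * mk (TensorAlgebra.ι ℂ v) ∈ F n := by
    intro n
    induction n with
    | zero =>
      intro b hb v
      rw [hF0] at hb ⊢
      obtain ⟨c, rfl⟩ := Submodule.mem_one.mp hb
      rw [Algebra.commutes, sub_self]
      exact Submodule.zero_mem _
    | succ n ih =>
      intro b hb v
      rw [hFsucc] at hb
      obtain ⟨b₁, hb₁, b₂, hb₂, rfl⟩ := Submodule.mem_sup.mp hb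
      have h1 : mk (TensorAlgebra.ι ℂ v) * b₁ - b₁ * mk (TensorAlgebra.ι ℂ v)
          ∈ F (n + 1) := hFmono (Nat.le_succ n) (ih b₁ hb₁ v)
      have h2 : mk (TensorAlgebra.ι ℂ v) * b₂ - b₂ * mk (TensorAlgebra.ι ℂ v)
          ∈ F (n + 1) := by
        refine Submodule.mul_induction_on hb₂ (fun m hm c hc => ?_) (fun x y hx hy => ?_)
        · have key : mk (TensorAlgebra.ι ℂ v) * (m * c) - (m * c) * mk (TensorAlgebra.ι ℂ v)
              = (mk (TensorAlgebra.ι ℂ v) * m - m * mk (TensorAlgebra.ι ℂ v)) * c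
                + m * (mk (TensorAlgebra.ι ℂ v) * c - c * mk (TensorAlgebra.ι ℂ v)) := by
            simp only [mul_sub, sub_mul, mul_add, add_mul, mul_assoc]; abel
          rw [key]
          apply add_mem
          · have h3 : (mk (TensorAlgebra.ι ℂ v) * m - m * mk (TensorAlgebra.ι ℂ v)) * c
                ∈ (1 : Submodule ℂ (WeylAlgebra ω)) * F n :=
              Submodule.mul_mem_mul (comm1 m hm v) hc
            rw [one_mul] at h3
            exact hFmono (Nat.le_succ n) h3
          · have h4 : m * (mk (TensorAlgebra.ι ℂ v) * c - c * mk (TensorAlgebra.ι ℂ v))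
                ∈ Vs * F n := Submodule.mul_mem_mul hm (ih c hc v)
            rw [hFsucc]
            exact Submodule.mem_sup_right h4
        · have : mk (TensorAlgebra.ι ℂ v) * (x + y) - (x + y) * mk (TensorAlgebra.ι ℂ v)
              = (mk (TensorAlgebra.ι ℂ v) * x - x * mk (TensorAlgebra.ι ℂ v))
                + (mk (TensorAlgebra.ι ℂ v) * y - y * mk (TensorAlgebra.ι ℂ v)) := by
            simp only [mul_sub, sub_mul, mul_add, add_mul, mul_assoc]; abel
          rw [this]; exact add_mem hx hy
      have : mk (TensorAlgebra.ι ℂ v) * (b₁ + b₂) - (b₁ + b₂) * mk (TensorAlgebra.ι ℂ v)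
          = (mk (TensorAlgebra.ι ℂ v) * b₁ - b₁ * mk (TensorAlgebra.ι ℂ v))
            + (mk (TensorAlgebra.ι ℂ v) * b₂ - b₂ * mk (TensorAlgebra.ι ℂ v)) := by
        simp only [mul_sub, sub_mul, mul_add, add_mul, mul_assoc]; abel
      rw [this]; exact add_mem h1 h2
  -- the twisted commutator span
  set E : Submodule ℂ (WeylAlgebra ω) :=
    Submodule.span ℂ {x | ∃ a b : WeylAlgebra ω, x = a * b - b * G a} with hEdef
  -- key: F n ≤ 1 ⊔ E
  have hFE : ∀ n, F n ≤ (1 : Submodule ℂ (WeylAlgebra ω)) ⊔ E := by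
    intro n
    induction n with
    | zero => rw [hF0]; exact le_sup_left
    | succ n ih =>
      rw [hFsucc]
      refine sup_le ih ?_
      rw [Submodule.mul_le]
      intro m hm c hc
      induction hm using Submodule.span_induction with
      | mem x hx =>
        obtain ⟨u, rfl⟩ := hx
        obtain ⟨v, hv⟩ := hsurj u
        have key : mk (TensorAlgebra.ι ℂ u) * c
            = (mk (TensorAlgebra.ι ℂ v) * c - c * G (mk (TensorAlgebra.ι ℂ v)))
              + (c * mk (TensorAlgebra.ι ℂ (g v)) - mk (TensorAlgebra.ι ℂ (g v)) * c) := by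
          rw [hG v, ← hv, map_sub, map_sub, sub_mul]
          abel
        rw [key]
        apply add_mem
        · exact Submodule.mem_sup_right
            (Submodule.subset_span ⟨mk (TensorAlgebra.ι ℂ v), c, rfl⟩)
        · have hcomm := commF n c hc (g v)
          have hneg : c * mk (TensorAlgebra.ι ℂ (g v)) - mk (TensorAlgebra.ι ℂ (g v)) * c
              ∈ F n := by
            have := Submodule.neg_mem _ hcomm
            simpa [neg_sub] using this
          exact ih hneg
      | zero => simpa using Submodule.zero_mem _
      | add x y hx hy ihx ihy =>
        rw [add_mul]; exact add_mem ihx ihy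
      | smul a x hx ihx =>
        rw [smul_mul_assoc]; exact Submodule.smul_mem _ a ihx
  -- every element lies in some F n
  have topF : ∀ x : WeylAlgebra ω, ∃ n, x ∈ F n := by
    intro x
    obtain ⟨t, rfl⟩ := RingQuot.mkAlgHom_surjective ℂ (WeylRel ω) x
    induction t using TensorAlgebra.induction with
    | algebraMap r =>
      exact ⟨0, by
        rw [hF0]
        exact Submodule.mem_one.mpr ⟨r, (AlgHom.commutes mk r).symm⟩⟩
    | ι v =>
      refine ⟨1, ?_⟩
      show mk (TensorAlgebra.ι ℂ v) ∈ ((1 : Submodule ℂ (WeylAlgebra ω)) ⊔ Vs) ^ 1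
      rw [pow_one]
      exact Submodule.mem_sup_right (Submodule.subset_span ⟨v, rfl⟩)
    | mul a b iha ihb =>
      obtain ⟨p, hp⟩ := iha
      obtain ⟨q, hq⟩ := ihb
      refine ⟨p + q, ?_⟩
      rw [map_mul]
      have := Submodule.mul_mem_mul hp hq
      rwa [hFdef, ← pow_add] at this
    | add a b iha ihb =>
      obtain ⟨p, hp⟩ := iha
      obtain ⟨q, hq⟩ := ihb
      refine ⟨max p q, ?_⟩
      rw [map_add]
      exact add_mem (hFmono (le_max_left p q) hp) (hFmono (le_max_right p q) hq)
  -- traces vanish on E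
  have hvanish : ∀ (T : WeylAlgebra ω →ₗ[ℂ] ℂ),
      (∀ a b : WeylAlgebra ω, T (a * b) = T (b * G a)) → ∀ x ∈ E, T x = 0 := by
    intro T hT x hx
    induction hx using Submodule.span_induction with
    | mem x hx =>
      obtain ⟨a, b, rfl⟩ := hx
      rw [map_sub, hT a b, sub_self]
    | zero => exact map_zero T
    | add x y hx hy ihx ihy => rw [map_add, ihx, ihy, add_zero]
    | smul a x hx ihx => rw [map_smul, ihx, smul_zero]
  -- values: every trace value is proportional to the value at 1
  have hval : ∀ x : WeylAlgebra ω, ∃ t : ℂ, T₁ x = t * T₁ 1 ∧ T₂ x = t * T₂ 1 := by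
    intro x
    obtain ⟨n, hn⟩ := topF x
    have hx : x ∈ (1 : Submodule ℂ (WeylAlgebra ω)) ⊔ E := hFE n hn
    obtain ⟨r, hr, e, he, rfl⟩ := Submodule.mem_sup.mp hx
    obtain ⟨t, rfl⟩ := Submodule.mem_one.mp hr
    refine ⟨t, ?_, ?_⟩
    · rw [map_add, hvanish T₁ hT₁ e he, add_zero, Algebra.algebraMap_eq_smul_one,
        map_smul, smul_eq_mul]
    · rw [map_add, hvanish T₂ hT₂ e he, add_zero, Algebra.algebraMap_eq_smul_one,
        map_smul, smul_eq_mul]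
  by_cases h1 : T₁ 1 = 0
  · refine ⟨1, 0, Or.inl one_ne_zero, ?_⟩
    ext x
    obtain ⟨t, ht1, _⟩ := hval x
    simp [ht1, h1]
  · refine ⟨T₂ 1, -T₁ 1, Or.inr (neg_ne_zero.mpr h1), ?_⟩
    ext x
    obtain ⟨t, ht1, ht2⟩ := hval x
    simp only [LinearMap.add_apply, LinearMap.smul_apply, LinearMap.zero_apply,
      smul_eq_mul, ht1, ht2]
    ring
end
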